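/- Fix λ > 0 and L > 0. Then the function k ↦ (1/k)·(artanh(k/λ) − artanh((k/λ)·cos(L·√(λ² − k²)/4))) tends to (1/λ)·(1 − cos(λ·L/4)) as k tends to 0 from the right within (0, λ) (i.e. the limit along the filter 𝓝[Set.Ioo 0 λ] 0 is 𝓝 ((1/λ)·(1 − cos(λ·L/4)))). -/

import Mathlib

open Topology

/-- The inverse hyperbolic tangent, `artanh x = (1/2)·log ((1 + x)/(1 − x))`. -/
noncomputable def Real.artanh' (x : ℝ) : ℝ := Real.log ((1 + x) / (1 - x)) / 2

/-- Extension of `artanh y / y` by its limit `1` at `y = 0`. -/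
noncomputable def artanhRatio (y : ℝ) : ℝ := if y = 0 then 1 else Real.artanh' y / y

lemma artanh_zero : Real.artanh' 0 = 0 := by simp [Real.artanh']

lemma artanh_eq_ratio_mul (y : ℝ) : Real.artanh' y = artanhRatio y * y := by
  unfold artanhRatio
  by_cases h : y = 0
  · simp [h, artanh_zero]
  · rw [if_neg h]; field_simp

lemma hasDerivAt_artanh_zero : HasDerivAt Real.artanh' 1 0 := by
  have ha : HasDerivAt (fun x : ℝ => 1 + x) 1 0 := (hasDerivAt_id 0).const_add 1
  have hb : HasDerivAt (fun x : ℝ => 1 - x) (-1) 0 := (hasDerivAt_id 0).const_sub 1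
  have hdiv : HasDerivAt (fun x : ℝ => (1 + x) / (1 - x))
      ((1 * (1 - 0) - (1 + 0) * (-1)) / (1 - 0) ^ 2) 0 := ha.div hb (by norm_num)
  have hlog : HasDerivAt Real.log (1 : ℝ)⁻¹ ((fun x : ℝ => (1 + x) / (1 - x)) 0) := by
    have := Real.hasDerivAt_log (one_ne_zero (α := ℝ))
    simpa using this
  have hcomp := hlog.comp 0 hdiv
  have := hcomp.div_const 2
  exact this.congr_deriv (by norm_num)

lemma tendsto_artanhRatio : Filter.Tendsto artanhRatio (𝓝 0) (𝓝 1) := by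
  have hslope : Filter.Tendsto (slope Real.artanh' 0) (𝓝[≠] 0) (𝓝 1) :=
    hasDerivAt_iff_tendsto_slope.mp hasDerivAt_artanh_zero
  have h1 : Filter.Tendsto artanhRatio (𝓝[≠] 0) (𝓝 1) := by
    refine hslope.congr' ?_
    filter_upwards [self_mem_nhdsWithin] with y hy
    have hy' : y ≠ 0 := hy
    simp [slope, hy', artanhRatio, hy, artanh_zero, div_eq_inv_mul]
  have h2 : Filter.Tendsto artanhRatio (pure (0 : ℝ)) (𝓝 1) := by
    have : artanhRatio 0 = 1 := by simp [artanhRatio]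
    simpa [this] using (tendsto_pure_nhds artanhRatio 0)
  have := h1.sup h2
  rwa [nhdsNE_sup_pure] at this

theorem tendsto_hyperbolic_bound_k_to_zero
    (lam L : ℝ) (hlam : 0 < lam) (hL : 0 < L) :
    Filter.Tendsto
      (fun k : ℝ => (1 / k) *
        (Real.artanh' (k / lam) -
          Real.artanh' ((k / lam) * Real.cos (L * Real.sqrt (lam ^ 2 - k ^ 2) / 4))))
      (𝓝[Set.Ioo 0 lam] 0)
      (𝓝 ((1 / lam) * (1 - Real.cos (lam * L / 4)))) := by
  set c : ℝ → ℝ := fun k => Real.cos (L * Real.sqrt (lam ^ 2 - k ^ 2) / 4) with hc_def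
  -- k tends to 0 along the filter
  have hk0 : Filter.Tendsto (fun k : ℝ => k) (𝓝[Set.Ioo 0 lam] 0) (𝓝 0) :=
    Filter.tendsto_id.mono_left nhdsWithin_le_nhds
  -- c is continuous, tends to cos(lam*L/4)
  have hcont : Continuous c := by
    apply Real.continuous_cos.comp
    continuity
  have hc : Filter.Tendsto c (𝓝[Set.Ioo 0 lam] 0) (𝓝 (Real.cos (lam * L / 4))) := by
    have := (hcont.tendsto 0).comp hk0
    have h0 : c 0 = Real.cos (lam * L / 4) := by
      simp [hc_def, Real.sqrt_sq hlam.le, mul_comm L lam]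
    rwa [Function.comp_def, h0] at this
  -- k/lam → 0
  have ha : Filter.Tendsto (fun k : ℝ => k / lam) (𝓝[Set.Ioo 0 lam] 0) (𝓝 0) := by
    simpa using hk0.div_const lam
  -- (k/lam) * c k → 0
  have hb : Filter.Tendsto (fun k : ℝ => (k / lam) * c k) (𝓝[Set.Ioo 0 lam] 0) (𝓝 0) := by
    simpa using ha.mul hc
  -- ratios tend to 1
  have hga : Filter.Tendsto (fun k : ℝ => artanhRatio (k / lam)) (𝓝[Set.Ioo 0 lam] 0) (𝓝 1) :=
    tendsto_artanhRatio.comp ha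
  have hgb : Filter.Tendsto (fun k : ℝ => artanhRatio ((k / lam) * c k))
      (𝓝[Set.Ioo 0 lam] 0) (𝓝 1) := tendsto_artanhRatio.comp hb
  -- the simplified function tends to the limit
  have hmain : Filter.Tendsto
      (fun k : ℝ => (1 / lam) * (artanhRatio (k / lam) - artanhRatio ((k / lam) * c k) * c k))
      (𝓝[Set.Ioo 0 lam] 0) (𝓝 ((1 / lam) * (1 - Real.cos (lam * L / 4)))) := by
    have := ((hga.sub (hgb.mul hc))).const_mul (1 / lam)
    simpa using this
  refine hmain.congr' ?_
  filter_upwards [self_mem_nhdsWithin] with k hk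
  have hk0' : k ≠ 0 := ne_of_gt hk.1
  rw [artanh_eq_ratio_mul, artanh_eq_ratio_mul]
  field_simp
  ring
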